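/- With the even-iteration representation ∏_{k=1}^n W_k = [[Π_n(A*A), iΦ_n(A*A)A*B],[iΦ̄_n(D*D)B*A, Π̄_n(D*D)]], define for a further parameter φ_{n+1}: Θ_n(x) := e^{iφ_{n+1}}(Π_n(x) + iΦ̄_n(x)(1−x)) and Ω_n(x) := e^{iφ_{n+1}}(Π̄_n(x) + iΦ_n(x)x). Then the odd iteration satisfies R_𝔨(φ_{n+1}) U ∏_{k=1}^n W_k = [[Θ_n(AA*) A, Ω_n(AA*) B],[Ω̄_n(DD*) C, Θ̄_n(DD*) D]] from 𝔥 ⊕ 𝔥^⊥ to 𝔨 ⊕ 𝔨^⊥. -/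

import Mathlib

open ContinuousLinearMap Polynomial

lemma clm_pow_comm {E F : Type*} [NormedAddCommGroup E] [NormedSpace ℂ E]
    [NormedAddCommGroup F] [NormedSpace ℂ F]
    (T : E →L[ℂ] F) (S : E →L[ℂ] E) (S' : F →L[ℂ] F)
    (h : T ∘L S = S' ∘L T) (m : ℕ) : T ∘L (S ^ m) = (S' ^ m) ∘L T := by
  induction m with
  | zero => simp [ContinuousLinearMap.one_def]
  | succ m ih =>
      rw [pow_succ, pow_succ, ContinuousLinearMap.mul_def, ContinuousLinearMap.mul_def,
        ← ContinuousLinearMap.comp_assoc, ih, ContinuousLinearMap.comp_assoc, h,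
        ← ContinuousLinearMap.comp_assoc]

lemma clm_aeval_comm {E F : Type*} [NormedAddCommGroup E] [NormedSpace ℂ E]
    [NormedAddCommGroup F] [NormedSpace ℂ F]
    (T : E →L[ℂ] F) (S : E →L[ℂ] E) (S' : F →L[ℂ] F)
    (h : T ∘L S = S' ∘L T) (p : Polynomial ℂ) :
    T ∘L aeval S p = aeval S' p ∘L T := by
  induction p using Polynomial.induction_on' with
  | add p q hp hq => simp [map_add, ContinuousLinearMap.comp_add,
      ContinuousLinearMap.add_comp, hp, hq]
  | monomial m a =>
      rw [aeval_monomial, aeval_monomial, Algebra.algebraMap_eq_smul_one, smul_mul_assoc,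
        one_mul, Algebra.algebraMap_eq_smul_one, smul_mul_assoc, one_mul,
        ContinuousLinearMap.comp_smul, ContinuousLinearMap.smul_comp, clm_pow_comm T S S' h]

set_option maxHeartbeats 8000000 in
open ContinuousLinearMap Complex Submodule Polynomial in
theorem stmt8
    {H : Type*} [NormedAddCommGroup H] [InnerProductSpace ℂ H] [CompleteSpace H]
    (𝔥 𝔨 : Submodule ℂ H) [CompleteSpace 𝔥] [CompleteSpace 𝔨]
    (U : H →L[ℂ] H) (hU1 : adjoint U ∘L U = 1) (hU2 : U ∘L adjoint U = 1)
    (A : 𝔥 →L[ℂ] 𝔨) (B : 𝔥ᗮ →L[ℂ] 𝔨) (C : 𝔥 →L[ℂ] 𝔨ᗮ) (D : 𝔥ᗮ →L[ℂ] 𝔨ᗮ)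
    (hA : ∀ x : 𝔥, A x = orthogonalProjection 𝔨 (U x))
    (hB : ∀ y : 𝔥ᗮ, B y = orthogonalProjection 𝔨 (U y))
    (hC : ∀ x : 𝔥, C x = orthogonalProjection 𝔨ᗮ (U x))
    (hD : ∀ y : 𝔥ᗮ, D y = orthogonalProjection 𝔨ᗮ (U y))
    (θ φ : ℕ → ℝ) (W Wn : ℕ → (H →L[ℂ] H))
    (hWdef : ∀ k, W k = (Complex.exp (θ k * Complex.I) • (𝔥.subtypeL ∘L orthogonalProjection 𝔥) +
          Complex.exp (-θ k * Complex.I) • (1 - 𝔥.subtypeL ∘L orthogonalProjection 𝔥)) ∘L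
        (adjoint U ∘L
          ((Complex.exp (φ k * Complex.I) • (𝔨.subtypeL ∘L orthogonalProjection 𝔨) +
            Complex.exp (-φ k * Complex.I) • (1 - 𝔨.subtypeL ∘L orthogonalProjection 𝔨)) ∘L U)))
    (hWn0 : Wn 0 = 1) (hWnS : ∀ n, Wn (n + 1) = W (n + 1) ∘L Wn n)
    (Pi' Φ' : ℕ → Polynomial ℂ) (n : ℕ)
    (hblock : ∀ x : 𝔥, ∀ y : 𝔥ᗮ,
      Wn n ((x : H) + (y : H)) =
        ((Polynomial.aeval (adjoint A ∘L A) (Pi' n) x +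
          (Complex.I • (Polynomial.aeval (adjoint A ∘L A) (Φ' n) ∘L (adjoint A ∘L B))) y : 𝔥) : H) +
        (((Complex.I • (Polynomial.aeval (adjoint D ∘L D) ((Φ' n).map (starRingEnd ℂ)) ∘L
            (adjoint B ∘L A))) x +
          Polynomial.aeval (adjoint D ∘L D) ((Pi' n).map (starRingEnd ℂ)) y : 𝔥ᗮ) : H))
    (Θ Ω : Polynomial ℂ)
    (hΘ : Θ = Polynomial.C (Complex.exp (φ (n + 1) * Complex.I)) *
      (Pi' n + Polynomial.C Complex.I * ((Φ' n).map (starRingEnd ℂ)) * (1 - Polynomial.X)))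
    (hΩ : Ω = Polynomial.C (Complex.exp (φ (n + 1) * Complex.I)) *
      ((Pi' n).map (starRingEnd ℂ) + Polynomial.C Complex.I * Φ' n * Polynomial.X)) :
    ∀ x : 𝔥, ∀ y : 𝔥ᗮ,
      ((Complex.exp (φ (n + 1) * Complex.I) • (𝔨.subtypeL ∘L orthogonalProjection 𝔨) +
        Complex.exp (-φ (n + 1) * Complex.I) • (1 - 𝔨.subtypeL ∘L orthogonalProjection 𝔨)) ∘L
        (U ∘L Wn n)) ((x : H) + (y : H)) =
      ((Polynomial.aeval (A ∘L adjoint A) Θ (A x) +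
        Polynomial.aeval (A ∘L adjoint A) Ω (B y) : 𝔨) : H) +
      ((Polynomial.aeval (D ∘L adjoint D) (Ω.map (starRingEnd ℂ)) (C x) +
        Polynomial.aeval (D ∘L adjoint D) (Θ.map (starRingEnd ℂ)) (D y) : 𝔨ᗮ) : H) := by
  intro x y
  -- basic unitary facts
  have hU1' : ∀ z : H, adjoint U (U z) = z := fun z => by
    have := congrArg (fun T : H →L[ℂ] H => T z) hU1; simpa using this
  have hU2' : ∀ z : H, U (adjoint U z) = z := fun z => by
    have := congrArg (fun T : H →L[ℂ] H => T z) hU2; simpa using this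
  -- operator forms of A, B, C, D and adjoints
  have hAop : A = orthogonalProjection 𝔨 ∘L (U ∘L 𝔥.subtypeL) := by
    refine ContinuousLinearMap.ext fun v => ?_; simpa using hA v
  have hBop : B = orthogonalProjection 𝔨 ∘L (U ∘L 𝔥ᗮ.subtypeL) := by
    refine ContinuousLinearMap.ext fun v => ?_; simpa using hB v
  have hCop : C = orthogonalProjection 𝔨ᗮ ∘L (U ∘L 𝔥.subtypeL) := by
    refine ContinuousLinearMap.ext fun v => ?_; simpa using hC v
  have hDop : D = orthogonalProjection 𝔨ᗮ ∘L (U ∘L 𝔥ᗮ.subtypeL) := by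
    refine ContinuousLinearMap.ext fun v => ?_; simpa using hD v
  have hAadj : ∀ k : 𝔨, adjoint A k = orthogonalProjection 𝔥 (adjoint U k) := by
    intro k
    rw [hAop, adjoint_comp, adjoint_comp, Submodule.adjoint_subtypeL,
      Submodule.adjoint_orthogonalProjection]
    rfl
  have hBadj : ∀ k : 𝔨, adjoint B k = orthogonalProjection 𝔥ᗮ (adjoint U k) := by
    intro k
    rw [hBop, adjoint_comp, adjoint_comp, Submodule.adjoint_subtypeL,
      Submodule.adjoint_orthogonalProjection]
    rfl
  have hCadj : ∀ k : 𝔨ᗮ, adjoint C k = orthogonalProjection 𝔥 (adjoint U k) := by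
    intro k
    rw [hCop, adjoint_comp, adjoint_comp, Submodule.adjoint_subtypeL,
      Submodule.adjoint_orthogonalProjection]
    rfl
  have hDadj : ∀ k : 𝔨ᗮ, adjoint D k = orthogonalProjection 𝔥ᗮ (adjoint U k) := by
    intro k
    rw [hDop, adjoint_comp, adjoint_comp, Submodule.adjoint_subtypeL,
      Submodule.adjoint_orthogonalProjection]
    rfl
  -- decompositions
  have hUdx : ∀ v : 𝔥, U v = ((A v : H) + (C v : H)) := fun v => by
    rw [hA, hC]; exact (Submodule.starProjection_add_starProjection_orthogonal (K := 𝔨) (U v)).symm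
  have hUdy : ∀ w : 𝔥ᗮ, U w = ((B w : H) + (D w : H)) := fun w => by
    rw [hB, hD]; exact (Submodule.starProjection_add_starProjection_orthogonal (K := 𝔨) (U w)).symm
  have hHdec : ∀ z : H, ((orthogonalProjection 𝔥 z : H) + (orthogonalProjection 𝔥ᗮ z : H)) = z :=
    Submodule.starProjection_add_starProjection_orthogonal (K := 𝔥)
  have pH : ∀ v : 𝔥, orthogonalProjection 𝔥 (v : H) = v :=
    fun v => orthogonalProjection_mem_subspace_eq_self v
  have pHo : ∀ v : 𝔥, orthogonalProjection 𝔥ᗮ (v : H) = 0 :=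
    fun v => orthogonalProjection_mem_subspace_orthogonalComplement_eq_zero
      (Submodule.le_orthogonal_orthogonal 𝔥 v.2)
  have pH' : ∀ w : 𝔥ᗮ, orthogonalProjection 𝔥ᗮ (w : H) = w :=
    fun w => orthogonalProjection_mem_subspace_eq_self w
  have pH'o : ∀ w : 𝔥ᗮ, orthogonalProjection 𝔥 (w : H) = 0 :=
    fun w => orthogonalProjection_mem_subspace_orthogonalComplement_eq_zero w.2
  have pK : ∀ k : 𝔨, orthogonalProjection 𝔨 (k : H) = k :=
    fun k => orthogonalProjection_mem_subspace_eq_self k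
  have pKo : ∀ k' : 𝔨ᗮ, orthogonalProjection 𝔨 (k' : H) = 0 :=
    fun k' => orthogonalProjection_mem_subspace_orthogonalComplement_eq_zero k'.2
  -- unitarity block relations
  have r1 : adjoint A ∘L A + adjoint C ∘L C = 1 := by
    refine ContinuousLinearMap.ext fun v => ?_
    simp only [ContinuousLinearMap.add_apply, ContinuousLinearMap.comp_apply,
      ContinuousLinearMap.one_apply, hAadj, hCadj]
    rw [← map_add, ← map_add, ← hUdx v, hU1' (v : H), pH]
  have r2 : adjoint B ∘L B + adjoint D ∘L D = 1 := by
    refine ContinuousLinearMap.ext fun w => ?_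
    simp only [ContinuousLinearMap.add_apply, ContinuousLinearMap.comp_apply,
      ContinuousLinearMap.one_apply, hBadj, hDadj]
    rw [← map_add, ← map_add, ← hUdy w, hU1' (w : H), pH']
  have r3 : adjoint A ∘L B + adjoint C ∘L D = 0 := by
    refine ContinuousLinearMap.ext fun w => ?_
    simp only [ContinuousLinearMap.add_apply, ContinuousLinearMap.comp_apply,
      ContinuousLinearMap.zero_apply, hAadj, hCadj]
    rw [← map_add, ← map_add, ← hUdy w, hU1' (w : H), pH'o]
  have r4 : adjoint B ∘L A + adjoint D ∘L C = 0 := by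
    refine ContinuousLinearMap.ext fun v => ?_
    simp only [ContinuousLinearMap.add_apply, ContinuousLinearMap.comp_apply,
      ContinuousLinearMap.zero_apply, hBadj, hDadj]
    rw [← map_add, ← map_add, ← hUdx v, hU1' (v : H), pHo]
  have c1 : A ∘L adjoint A + B ∘L adjoint B = 1 := by
    refine ContinuousLinearMap.ext fun k => ?_
    simp only [ContinuousLinearMap.add_apply, ContinuousLinearMap.comp_apply,
      ContinuousLinearMap.one_apply]
    rw [hA, hB, hAadj, hBadj, ← map_add, ← map_add, hHdec (adjoint U (k : H)),
      hU2' (k : H), pK]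
  have c2 : C ∘L adjoint C + D ∘L adjoint D = 1 := by
    refine ContinuousLinearMap.ext fun k => ?_
    simp only [ContinuousLinearMap.add_apply, ContinuousLinearMap.comp_apply,
      ContinuousLinearMap.one_apply]
    rw [hC, hD, hCadj, hDadj, ← map_add, ← map_add, hHdec (adjoint U (k : H)),
      hU2' (k : H)]
    exact orthogonalProjection_mem_subspace_eq_self k
  -- intertwining relations
  have L2 : B ∘L (adjoint D ∘L D) = (A ∘L adjoint A) ∘L B := by
    refine ContinuousLinearMap.ext fun w => ?_
    have h1 := congrArg (fun T : 𝔥ᗮ →L[ℂ] 𝔥ᗮ => T w) r2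
    have h2 := congrArg (fun T : 𝔨 →L[ℂ] 𝔨 => T (B w)) c1
    simp only [ContinuousLinearMap.add_apply, ContinuousLinearMap.comp_apply,
      ContinuousLinearMap.one_apply] at h1 h2
    simp only [ContinuousLinearMap.comp_apply]
    have h3 : adjoint D (D w) = w - adjoint B (B w) := eq_sub_of_add_eq' h1
    rw [h3, map_sub]
    exact (eq_sub_of_add_eq h2).symm
  have L4 : C ∘L (adjoint A ∘L A) = (D ∘L adjoint D) ∘L C := by
    refine ContinuousLinearMap.ext fun v => ?_
    have h1 := congrArg (fun T : 𝔥 →L[ℂ] 𝔥 => T v) r1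
    have h2 := congrArg (fun T : 𝔨ᗮ →L[ℂ] 𝔨ᗮ => T (C v)) c2
    simp only [ContinuousLinearMap.add_apply, ContinuousLinearMap.comp_apply,
      ContinuousLinearMap.one_apply] at h1 h2
    simp only [ContinuousLinearMap.comp_apply]
    have h3 : adjoint A (A v) = v - adjoint C (C v) := eq_sub_of_add_eq h1
    rw [h3, map_sub]
    exact (eq_sub_of_add_eq' h2).symm
  -- commuting aeval across the corner operators
  have cA : ∀ (p : Polynomial ℂ) (v : 𝔥),
      aeval (A ∘L adjoint A) p (A v) = A (aeval (adjoint A ∘L A) p v) := by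
    intro p v
    have := congrArg (fun T : 𝔥 →L[ℂ] 𝔨 => T v)
      (clm_aeval_comm A (adjoint A ∘L A) (A ∘L adjoint A)
        (by rw [ContinuousLinearMap.comp_assoc]) p)
    simpa using this.symm
  have cB : ∀ (p : Polynomial ℂ) (w : 𝔥ᗮ),
      aeval (A ∘L adjoint A) p (B w) = B (aeval (adjoint D ∘L D) p w) := by
    intro p w
    have := congrArg (fun T : 𝔥ᗮ →L[ℂ] 𝔨 => T w)
      (clm_aeval_comm B (adjoint D ∘L D) (A ∘L adjoint A) L2 p)
    simpa using this.symm
  have cC : ∀ (p : Polynomial ℂ) (v : 𝔥),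
      aeval (D ∘L adjoint D) p (C v) = C (aeval (adjoint A ∘L A) p v) := by
    intro p v
    have := congrArg (fun T : 𝔥 →L[ℂ] 𝔨ᗮ => T v)
      (clm_aeval_comm C (adjoint A ∘L A) (D ∘L adjoint D) L4 p)
    simpa using this.symm
  have cD : ∀ (p : Polynomial ℂ) (w : 𝔥ᗮ),
      aeval (D ∘L adjoint D) p (D w) = D (aeval (adjoint D ∘L D) p w) := by
    intro p w
    have := congrArg (fun T : 𝔥ᗮ →L[ℂ] 𝔨ᗮ => T w)
      (clm_aeval_comm D (adjoint D ∘L D) (D ∘L adjoint D)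
        (by rw [ContinuousLinearMap.comp_assoc]) p)
    simpa using this.symm
  -- pointwise corner facts
  have hc1' : ∀ k : 𝔨, k - A (adjoint A k) = B (adjoint B k) := by
    intro k
    have h2 := congrArg (fun T : 𝔨 →L[ℂ] 𝔨 => T k) c1
    simp only [ContinuousLinearMap.add_apply, ContinuousLinearMap.comp_apply,
      ContinuousLinearMap.one_apply] at h2
    exact (eq_sub_of_add_eq' h2).symm
  have hc2' : ∀ k : 𝔨ᗮ, k - D (adjoint D k) = C (adjoint C k) := by
    intro k
    have h2 := congrArg (fun T : 𝔨ᗮ →L[ℂ] 𝔨ᗮ => T k) c2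
    simp only [ContinuousLinearMap.add_apply, ContinuousLinearMap.comp_apply,
      ContinuousLinearMap.one_apply] at h2
    exact (eq_sub_of_add_eq h2).symm
  have hr3' : adjoint C (D y) = - adjoint A (B y) := by
    have h := congrArg (fun T : 𝔥ᗮ →L[ℂ] 𝔥 => T y) r3
    simp only [ContinuousLinearMap.add_apply, ContinuousLinearMap.comp_apply,
      ContinuousLinearMap.zero_apply] at h
    exact eq_neg_of_add_eq_zero_right h
  have hr4' : adjoint D (C x) = - adjoint B (A x) := by
    have h := congrArg (fun T : 𝔥 →L[ℂ] 𝔥ᗮ => T x) r4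
    simp only [ContinuousLinearMap.add_apply, ContinuousLinearMap.comp_apply,
      ContinuousLinearMap.zero_apply] at h
    exact eq_neg_of_add_eq_zero_right h
  -- conjugated polynomials
  have hmapmap : ∀ p : Polynomial ℂ, (p.map (starRingEnd ℂ)).map (starRingEnd ℂ) = p := by
    intro p
    rw [Polynomial.map_map]
    have : (starRingEnd ℂ).comp (starRingEnd ℂ) = RingHom.id ℂ :=
      RingHom.ext starRingEnd_self_apply
    rw [this, Polynomial.map_id]
  have he' : (starRingEnd ℂ) (Complex.exp (φ (n+1) * Complex.I)) =
      Complex.exp (-φ (n+1) * Complex.I) := by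
    rw [← Complex.exp_conj]
    congr 1
    simp only [map_mul, Complex.conj_ofReal, Complex.conj_I]
    ring
  have hΘb : Θ.map (starRingEnd ℂ) = Polynomial.C (Complex.exp (-φ (n+1) * Complex.I)) *
      ((Pi' n).map (starRingEnd ℂ) + Polynomial.C (-Complex.I) * (Φ' n) * (1 - Polynomial.X)) := by
    rw [hΘ]
    simp only [Polynomial.map_mul, Polynomial.map_add, Polynomial.map_sub, Polynomial.map_one,
      Polynomial.map_C, Polynomial.map_X, hmapmap, he', Complex.conj_I]
  have hΩb : Ω.map (starRingEnd ℂ) = Polynomial.C (Complex.exp (-φ (n+1) * Complex.I)) *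
      (Pi' n + Polynomial.C (-Complex.I) * ((Φ' n).map (starRingEnd ℂ)) * Polynomial.X) := by
    rw [hΩ]
    simp only [Polynomial.map_mul, Polynomial.map_add, Polynomial.map_C, Polynomial.map_X,
      hmapmap, he', Complex.conj_I]
  -- abbreviations for the four component vectors
  set u1 : 𝔥 := aeval (adjoint A ∘L A) (Pi' n) x with hu1
  set u2 : 𝔥 := aeval (adjoint A ∘L A) (Φ' n) (adjoint A (B y)) with hu2
  set v1 : 𝔥ᗮ := aeval (adjoint D ∘L D) ((Φ' n).map (starRingEnd ℂ)) (adjoint B (A x)) with hv1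
  set v2 : 𝔥ᗮ := aeval (adjoint D ∘L D) ((Pi' n).map (starRingEnd ℂ)) y with hv2
  have hWb : Wn n ((x : H) + (y : H)) =
      ((u1 + Complex.I • u2 : 𝔥) : H) + ((Complex.I • v1 + v2 : 𝔥ᗮ) : H) := by
    rw [hblock x y, hu1, hu2, hv1, hv2]
    simp only [ContinuousLinearMap.smul_apply, ContinuousLinearMap.comp_apply]
  -- the two component identities
  have key1 : aeval (A ∘L adjoint A) Θ (A x) + aeval (A ∘L adjoint A) Ω (B y)
      = Complex.exp (φ (n+1) * Complex.I) •
        (A (u1 + Complex.I • u2) + B (Complex.I • v1 + v2)) := by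
    rw [hΘ, hΩ]
    simp only [map_mul, map_add, map_sub, map_one, aeval_C, aeval_X,
      ContinuousLinearMap.mul_apply, ContinuousLinearMap.add_apply,
      ContinuousLinearMap.sub_apply, ContinuousLinearMap.one_apply,
      Algebra.algebraMap_eq_smul_one, ContinuousLinearMap.smul_apply,
      ContinuousLinearMap.comp_apply]
    rw [← smul_sub, ← smul_sub, ← map_sub, hc1' (A x)]
    simp only [cA, cB, ← hu1, ← hu2, ← hv1, ← hv2, map_add, map_smul]
    module
  have key2 : aeval (D ∘L adjoint D) (Ω.map (starRingEnd ℂ)) (C x) +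
        aeval (D ∘L adjoint D) (Θ.map (starRingEnd ℂ)) (D y)
      = Complex.exp (-φ (n+1) * Complex.I) •
        (C (u1 + Complex.I • u2) + D (Complex.I • v1 + v2)) := by
    rw [hΘb, hΩb]
    simp only [map_mul, map_add, map_sub, map_one, aeval_C, aeval_X,
      ContinuousLinearMap.mul_apply, ContinuousLinearMap.add_apply,
      ContinuousLinearMap.sub_apply, ContinuousLinearMap.one_apply,
      Algebra.algebraMap_eq_smul_one, ContinuousLinearMap.smul_apply,
      ContinuousLinearMap.comp_apply]
    have n1 : aeval (D ∘L adjoint D) ((Φ' n).map (starRingEnd ℂ))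
        (D (-(adjoint B (A x)))) = -(D v1) := by
      rw [map_neg D, map_neg, cD]
    have n2 : aeval (D ∘L adjoint D) (Φ' n) (C (-(adjoint A (B y)))) = -(C u2) := by
      rw [map_neg C, map_neg, cC]
    rw [hr4', n1, ← smul_sub, ← smul_sub, ← map_sub (aeval (D ∘L adjoint D) (Φ' n)),
      hc2' (D y), hr3', n2]
    simp only [cC, cD, ← hu1, ← hu2, ← hv1, ← hv2, map_add, map_smul, smul_neg, neg_neg]
    module
  -- assemble
  rw [ContinuousLinearMap.comp_apply, ContinuousLinearMap.comp_apply, hWb, map_add,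
    hUdx (u1 + Complex.I • u2), hUdy (Complex.I • v1 + v2), key1, key2]
  simp only [ContinuousLinearMap.add_apply, ContinuousLinearMap.smul_apply,
    ContinuousLinearMap.comp_apply, ContinuousLinearMap.sub_apply, ContinuousLinearMap.one_apply,
    Submodule.subtypeL_apply, map_add, pK, pKo, add_zero, zero_add,
    Submodule.coe_add, Submodule.coe_smul, ZeroMemClass.coe_zero, smul_zero, sub_zero]
  module
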